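/- arXiv:2506.12521 — 6 statements merged into one kernel-verified Lean document; each statement's English description precedes it below -/
import Mathlib

section
/- Let A be a C-hyperideal of a commutative multiplicative hyperring G and S a multiplicative closed subset of G with A ∩ S = ∅. Then A is a quasi S-primary hyperideal of G if and only if rad(A) is an S-prime hyperideal of G. -/
open Set

/-- A commutative multiplicative hyperring: a commutative additive group with a
commutative, associative hyperoperation `hmul` satisfying `(-a)∘b = -(a∘b)`,
weak distributivity, and having an identity element `e` with `a ∈ e∘a`. -/
class MulHyperring (G : Type*) extends AddCommGroup G where
  hmul : G → G → Set G
  hmul_nonempty : ∀ a b : G, (hmul a b).Nonempty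
  hmul_comm : ∀ a b : G, hmul a b = hmul b a
  hmul_assoc : ∀ a b c : G, (⋃ x ∈ hmul a b, hmul x c) = ⋃ x ∈ hmul b c, hmul a x
  neg_hmul : ∀ a b : G, hmul (-a) b = (fun x => -x) '' (hmul a b)
  hmul_add : ∀ a b c : G,
    hmul a (b + c) ⊆ {x | ∃ u ∈ hmul a b, ∃ v ∈ hmul a c, x = u + v}
  e : G
  e_mem : ∀ a : G, a ∈ hmul e a

namespace MulHyperring

variable {G : Type*} [MulHyperring G]

/-- Hyperproduct of an element with a set: `a ∘ B = ⋃ b ∈ B, a ∘ b`. -/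
def smulSet (a : G) (B : Set G) : Set G := ⋃ b ∈ B, hmul a b

/-- Hyperproduct of two sets. -/
def setMul (A B : Set G) : Set G := ⋃ a ∈ A, ⋃ b ∈ B, hmul a b

/-- Hyperproduct `a₁ ∘ a₂ ∘ ⋯ ∘ aₙ` of a (nonempty) list of elements. -/
def hProd : List G → Set G
  | [] => ∅
  | [a] => {a}
  | a :: b :: l => smulSet a (hProd (b :: l))

/-- `aⁿ` as a hyperproduct. -/
def hPow (a : G) (n : ℕ) : Set G := hProd (List.replicate n a)

/-- `A` is a hyperideal of `G`. -/
def IsHyperideal (A : Set G) : Prop :=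
  A.Nonempty ∧ (∀ x ∈ A, ∀ y ∈ A, x - y ∈ A) ∧ ∀ r : G, ∀ x ∈ A, hmul r x ⊆ A

/-- `A` is a `C`-hyperideal: any finite hyperproduct meeting `A` is contained in `A`. -/
def IsCHyperideal (A : Set G) : Prop :=
  IsHyperideal A ∧ ∀ l : List G, l ≠ [] → (hProd l ∩ A).Nonempty → hProd l ⊆ A

/-- The radical of a (C-)hyperideal: `{a | aⁿ ⊆ A for some n ≥ 1}`. -/
def rad (A : Set G) : Set G := {a | ∃ n : ℕ, 1 ≤ n ∧ hPow a n ⊆ A}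

/-- The hyperideal generated by a set. -/
def idealGen (X : Set G) : Set G := ⋂₀ {A | IsHyperideal A ∧ X ⊆ A}

/-- The hyperideal product of two hyperideals. -/
def idealMul (A B : Set G) : Set G := idealGen (setMul A B)

/-- Multiplicative closed subset. -/
def IsMCS (S : Set G) : Prop :=
  e ∈ S ∧ ∀ s₁ ∈ S, ∀ s₂ ∈ S, (hmul s₁ s₂ ∩ S).Nonempty

/-- Prime hyperideal. -/
def IsPrime (P : Set G) : Prop :=
  IsHyperideal P ∧ P ≠ univ ∧ ∀ x y : G, hmul x y ⊆ P → x ∈ P ∨ y ∈ P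

/-- `S`-prime hyperideal. -/
def IsSPrime (S A : Set G) : Prop :=
  IsHyperideal A ∧ A ∩ S = ∅ ∧
    ∃ t ∈ S, ∀ u v : G, hmul u v ⊆ A → hmul t u ⊆ A ∨ hmul t v ⊆ A

/-- `S`-primary hyperideal. -/
def IsSPrimary (S A : Set G) : Prop :=
  IsHyperideal A ∧ A ∩ S = ∅ ∧
    ∃ t ∈ S, ∀ u v : G, hmul u v ⊆ A → hmul t u ⊆ A ∨ hmul t v ⊆ rad A

/-- Quasi `S`-primary hyperideal. -/
def IsQuasiSPrimary (S A : Set G) : Prop :=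
  IsHyperideal A ∧ A ∩ S = ∅ ∧
    ∃ t ∈ S, ∀ u v : G, hmul u v ⊆ A → hmul t u ⊆ rad A ∨ hmul t v ⊆ rad A

/-- Weakly quasi `S`-primary hyperideal. -/
def IsWeaklyQuasiSPrimary (S A : Set G) : Prop :=
  IsHyperideal A ∧ A ∩ S = ∅ ∧
    ∃ t ∈ S, ∀ u v : G, 0 ∉ hmul u v → hmul u v ⊆ A →
      hmul t u ⊆ rad A ∨ hmul t v ⊆ rad A

/-- Strongly quasi `S`-primary hyperideal. -/
def IsStronglyQuasiSPrimary (S A : Set G) : Prop :=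
  IsHyperideal A ∧ A ∩ S = ∅ ∧
    ∃ t ∈ S, ∀ u v : G, hmul u v ⊆ A →
      smulSet t (hPow u 2) ⊆ A ∨ hmul t v ⊆ rad A

/-- The residual `(B : x) = {y | y ∘ x ⊆ B}`. -/
def colon (B : Set G) (x : G) : Set G := {y | hmul y x ⊆ B}

end MulHyperring

namespace MulHyperring

variable {G : Type*} [MulHyperring G]

lemma replicate_ne_nil' {n : ℕ} (hn : 1 ≤ n) (a : G) : List.replicate n a ≠ [] := by
  cases n with
  | zero => omega
  | succ n => simp [List.replicate_succ]

lemma append_rep_ne_nil {i j : ℕ} (h : 1 ≤ i + j) (a b : G) :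
    List.replicate i a ++ List.replicate j b ≠ [] := by
  intro hcon
  have := congrArg List.length hcon
  simp at this
  omega

lemma hProd_cons (a : G) {l : List G} (h : l ≠ []) :
    hProd (a :: l) = smulSet a (hProd l) := by
  cases l with
  | nil => exact absurd rfl h
  | cons b l => rfl

lemma hProd_singleton (a : G) : hProd [a] = {a} := rfl

lemma hProd_pair (a b : G) : hProd [a, b] = hmul a b := by
  simp [hProd, smulSet]

lemma hProd_nonempty : ∀ {l : List G}, l ≠ [] → (hProd l).Nonempty
  | [], h => absurd rfl h
  | [a], _ => ⟨a, rfl⟩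
  | a :: b :: l, _ => by
    obtain ⟨x, hx⟩ := hProd_nonempty (l := b :: l) (by simp)
    obtain ⟨y, hy⟩ := hmul_nonempty a x
    exact ⟨y, Set.mem_biUnion hx hy⟩

lemma hPow_nonempty (a : G) {n : ℕ} (hn : 1 ≤ n) : (hPow a n).Nonempty :=
  hProd_nonempty (replicate_ne_nil' hn a)

lemma hPow_one (a : G) : hPow a 1 = {a} := rfl

lemma hPow_succ (a : G) {n : ℕ} (hn : 1 ≤ n) : hPow a (n + 1) = smulSet a (hPow a n) := by
  show hProd (List.replicate (n+1) a) = _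
  rw [List.replicate_succ, hProd_cons a (replicate_ne_nil' hn a)]
  rfl

lemma smulSet_mono (a : G) {B C : Set G} (h : B ⊆ C) : smulSet a B ⊆ smulSet a C := by
  intro x hx
  simp only [smulSet, Set.mem_iUnion] at hx ⊢
  obtain ⟨b, hb, hxb⟩ := hx
  exact ⟨b, h hb, hxb⟩

lemma smulSet_biUnion (a : G) {ι : Type*} (Q : Set ι) (F : ι → Set G) :
    smulSet a (⋃ x ∈ Q, F x) = ⋃ x ∈ Q, smulSet a (F x) := by
  ext w
  simp only [smulSet, Set.mem_iUnion]
  tauto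

lemma smulSet_hmul (a b c : G) : (⋃ y ∈ hmul a b, hmul y c) = smulSet a (hmul b c) :=
  hmul_assoc a b c

lemma biUnion_smulSet (a b : G) (C : Set G) :
    (⋃ y ∈ hmul a b, smulSet y C) = smulSet a (smulSet b C) := by
  have h1 : (⋃ y ∈ hmul a b, smulSet y C) = ⋃ c ∈ C, ⋃ y ∈ hmul a b, hmul y c := by
    ext w
    simp only [smulSet, Set.mem_iUnion]
    tauto
  have h2 : smulSet a (smulSet b C) = ⋃ c ∈ C, smulSet a (hmul b c) :=
    smulSet_biUnion a C fun c => hmul b c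
  rw [h1, h2]
  exact Set.iUnion₂_congr fun c _ => smulSet_hmul a b c

lemma smulSet_comm (a b : G) (C : Set G) :
    smulSet a (smulSet b C) = smulSet b (smulSet a C) := by
  rw [← biUnion_smulSet, ← biUnion_smulSet, hmul_comm]

lemma hProd_perm : ∀ {l l' : List G}, l.Perm l' → hProd l = hProd l' := by
  intro l l' h
  induction h with
  | nil => rfl
  | cons x h ih =>
    rename_i l₁ l₂
    cases l₁ with
    | nil =>
      cases l₂ with
      | nil => rfl
      | cons b l₂ => simpa using h.length_eq
    | cons a l₁ =>
      cases l₂ with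
      | nil => simpa using h.length_eq
      | cons b l₂ =>
        rw [hProd_cons x (by simp), hProd_cons x (by simp), ih]
  | swap a b l =>
    cases l with
    | nil =>
      show hProd [b, a] = hProd [a, b]
      rw [hProd_pair, hProd_pair, hmul_comm]
    | cons c l =>
      show smulSet b (smulSet a (hProd (c :: l))) = smulSet a (smulSet b (hProd (c :: l)))
      rw [smulSet_comm]
  | trans _ _ ih₁ ih₂ => rw [ih₁, ih₂]

lemma hProd_append : ∀ {l₁ : List G}, l₁ ≠ [] → ∀ {l₂ : List G}, l₂ ≠ [] →
    hProd (l₁ ++ l₂) = ⋃ x ∈ hProd l₁, smulSet x (hProd l₂) := by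
  intro l₁
  induction l₁ with
  | nil => intro h; exact absurd rfl h
  | cons a l₁ ih =>
    intro _ l₂ h₂
    cases l₁ with
    | nil =>
      show hProd (a :: l₂) = ⋃ x ∈ hProd [a], smulSet x (hProd l₂)
      rw [hProd_cons a h₂, hProd_singleton]
      simp
    | cons b l₁ =>
      have h1 : (b :: l₁ : List G) ≠ [] := by simp
      calc hProd ((a :: b :: l₁) ++ l₂)
          = smulSet a (hProd ((b :: l₁) ++ l₂)) := by
            rw [List.cons_append, hProd_cons a (by simp [h₂])]
        _ = smulSet a (⋃ x ∈ hProd (b :: l₁), smulSet x (hProd l₂)) := by rw [ih h1 h₂]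
        _ = ⋃ x ∈ hProd (b :: l₁), smulSet a (smulSet x (hProd l₂)) :=
            smulSet_biUnion a _ _
        _ = ⋃ x ∈ hProd (b :: l₁), ⋃ y ∈ hmul a x, smulSet y (hProd l₂) := by
            refine Set.iUnion₂_congr fun x _ => ?_
            rw [biUnion_smulSet]
        _ = ⋃ y ∈ hProd (a :: b :: l₁), smulSet y (hProd l₂) := by
            rw [hProd_cons a h1]
            ext w
            simp only [smulSet, Set.mem_iUnion]
            tauto

lemma hProd_cons_subset {w : G} {l : List G} (hw : w ∈ hProd l) (hl : l ≠ []) :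
    ∀ l' : List G, hProd (w :: l') ⊆ hProd (l ++ l') := by
  intro l'
  cases l' with
  | nil =>
    rw [List.append_nil, hProd_singleton]
    exact Set.singleton_subset_iff.mpr hw
  | cons a l' =>
    rw [hProd_cons w (by simp), hProd_append hl (l₂ := a :: l') (by simp)]
    exact fun y hy => Set.mem_biUnion hw hy

lemma hProd_append_subset_of_right {A : Set G} (hA : IsHyperideal A) :
    ∀ (l₁ : List G) {l₂ : List G}, l₂ ≠ [] → hProd l₂ ⊆ A → hProd (l₁ ++ l₂) ⊆ A := by
  intro l₁
  induction l₁ with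
  | nil => intro l₂ _ h; simpa using h
  | cons a l₁ ih =>
    intro l₂ h2 h
    have hne : (l₁ ++ l₂ : List G) ≠ [] := fun hc => h2 (List.append_eq_nil_iff.mp hc).2
    rw [List.cons_append, hProd_cons a hne]
    intro y hy
    simp only [smulSet, Set.mem_iUnion] at hy
    obtain ⟨x, hx, hyx⟩ := hy
    exact hA.2.2 a x (ih h2 h hx) hyx

lemma hPow_subset_pair {a b w : G} (hw : w ∈ hmul a b) :
    ∀ n, 1 ≤ n → hPow w n ⊆ hProd (List.replicate n a ++ List.replicate n b) := by
  intro n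
  induction n with
  | zero => omega
  | succ n ih =>
    intro _
    by_cases hn : 1 ≤ n
    · rw [hPow_succ w hn]
      refine (smulSet_mono w (ih hn)).trans ?_
      rw [← hProd_cons w (append_rep_ne_nil (by omega) a b)]
      refine (hProd_cons_subset (l := [a, b]) (by rw [hProd_pair]; exact hw) (by simp) _).trans ?_
      refine Eq.subset (hProd_perm ?_)
      show ([a, b] ++ (List.replicate n a ++ List.replicate n b)).Perm _
      have : List.replicate (n+1) a ++ List.replicate (n+1) b
          = a :: (List.replicate n a ++ (b :: List.replicate n b)) := by
        rw [List.replicate_succ, List.replicate_succ, List.cons_append]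
      rw [this]
      exact List.Perm.cons a
        (List.perm_middle (a := b) (l₁ := List.replicate n a)
          (l₂ := List.replicate n b)).symm
    · have hn0 : n = 0 := by omega
      subst hn0
      rw [hPow_one]
      have he : (List.replicate 1 a ++ List.replicate 1 b : List G) = [a, b] := rfl
      rw [he, hProd_pair]
      exact Set.singleton_subset_iff.mpr hw

lemma hProd_append_replicate_subset {u x : G} {n : ℕ} (hn : 1 ≤ n) (hx : x ∈ hPow u n) :
    ∀ (m : ℕ) (l0 : List G),
      hProd (l0 ++ List.replicate m x) ⊆ hProd (l0 ++ List.replicate (m * n) u) := by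
  intro m
  induction m with
  | zero => intro l0; simp
  | succ m ih =>
    intro l0
    have hrepne : List.replicate n u ≠ [] := replicate_ne_nil' hn u
    have e1 : hProd (l0 ++ List.replicate (m+1) x) = hProd (x :: (l0 ++ List.replicate m x)) := by
      refine hProd_perm ?_
      rw [List.replicate_succ]
      exact List.perm_middle
    rw [e1]
    have hstep : hProd (x :: (l0 ++ List.replicate m x)) ⊆
        hProd ((List.replicate n u ++ l0) ++ List.replicate m x) := by
      have h := hProd_cons_subset (w := x) (l := List.replicate n u) hx hrepne
        (l0 ++ List.replicate m x)
      rwa [← List.append_assoc] at h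
    refine hstep.trans ?_
    refine (ih (List.replicate n u ++ l0)).trans ?_
    refine Eq.subset (hProd_perm ?_)
    have e2 : List.replicate ((m+1) * n) u
        = List.replicate (m * n) u ++ List.replicate n u := by
      rw [← List.replicate_add]
      congr 1
      ring
    rw [e2, ← List.append_assoc]
    refine List.Perm.trans (List.perm_append_comm.append_right _) ?_
    rw [List.append_assoc, List.append_assoc]
    exact List.Perm.append_left l0 List.perm_append_comm

lemma zero_mem_of {A : Set G} (hA : IsHyperideal A) : (0 : G) ∈ A := by
  obtain ⟨a, ha⟩ := hA.1
  simpa using hA.2.1 a ha a ha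

lemma neg_mem_of {A : Set G} (hA : IsHyperideal A) {a : G} (ha : a ∈ A) : -a ∈ A := by
  simpa using hA.2.1 0 (zero_mem_of hA) a ha

lemma add_mem_of {A : Set G} (hA : IsHyperideal A) {a b : G} (ha : a ∈ A) (hb : b ∈ A) :
    a + b ∈ A := by
  simpa [sub_neg_eq_add] using hA.2.1 a ha (-b) (neg_mem_of hA hb)

lemma smulSet_neg_left (a : G) (B : Set G) :
    smulSet (-a) B = (fun x => -x) '' smulSet a B := by
  ext w
  simp only [smulSet, Set.mem_iUnion, Set.mem_image, neg_hmul]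
  constructor
  · rintro ⟨b, hb, x, hx, rfl⟩
    exact ⟨x, ⟨b, hb, hx⟩, rfl⟩
  · rintro ⟨x, ⟨b, hb, hx⟩, rfl⟩
    exact ⟨b, hb, x, hx, rfl⟩

lemma smulSet_neg_right (a : G) (C : Set G) :
    smulSet a ((fun x => -x) '' C) = (fun x => -x) '' smulSet a C := by
  have key : ∀ c : G, hmul a (-c) = (fun x => -x) '' hmul a c := by
    intro c
    rw [hmul_comm a (-c), neg_hmul, hmul_comm]
  ext w
  simp only [smulSet, Set.mem_iUnion, Set.mem_image]
  constructor
  · rintro ⟨b, ⟨c, hc, rfl⟩, hw⟩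
    rw [key c] at hw
    obtain ⟨x, hx, rfl⟩ := hw
    exact ⟨x, ⟨c, hc, hx⟩, rfl⟩
  · rintro ⟨x, ⟨c, hc, hx⟩, rfl⟩
    refine ⟨-c, ⟨c, hc, rfl⟩, ?_⟩
    rw [key c]
    exact ⟨x, hx, rfl⟩

lemma hPow_neg (y : G) : ∀ n, 1 ≤ n →
    hPow (-y) n = hPow y n ∨ hPow (-y) n = (fun x => -x) '' hPow y n := by
  intro n
  induction n with
  | zero => omega
  | succ n ih =>
    intro _
    by_cases hn : 1 ≤ n
    · rw [hPow_succ _ hn, hPow_succ _ hn, smulSet_neg_left]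
      rcases ih hn with h | h
      · right; rw [h]
      · left
        rw [h, smulSet_neg_right, ← Set.image_comp]
        simp
    · have hn0 : n = 0 := by omega
      subst hn0
      right
      rw [hPow_one, hPow_one]
      simp

lemma hPow_neg_subset {A : Set G} (hA : IsHyperideal A) {y : G} {n : ℕ} (hn : 1 ≤ n)
    (h : hPow y n ⊆ A) : hPow (-y) n ⊆ A := by
  rcases hPow_neg y n hn with he | he <;> rw [he]
  · exact h
  · rintro w ⟨z, hz, rfl⟩
    exact neg_mem_of hA (h hz)

lemma hPow_add_subset (a b : G) : ∀ N, 1 ≤ N → hPow (a + b) N ⊆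
    (AddSubsemigroup.closure
      {w : G | ∃ i, i ≤ N ∧ w ∈ hProd (List.replicate i a ++ List.replicate (N - i) b)} :
      Set G) := by
  intro N
  induction N with
  | zero => omega
  | succ N ih =>
    intro _
    set T : ℕ → Set G := fun N =>
      {w : G | ∃ i, i ≤ N ∧ w ∈ hProd (List.replicate i a ++ List.replicate (N - i) b)} with hT
    by_cases hN : 1 ≤ N
    · have key : ∀ z, z ∈ AddSubsemigroup.closure (T N) →
          hmul (a + b) z ⊆ (AddSubsemigroup.closure (T (N+1)) : Set G) := by
        intro z hz
        induction hz using AddSubsemigroup.closure_induction with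
        | mem x hx =>
          obtain ⟨i, hiN, hxP⟩ := hx
          intro w hw
          rw [hmul_comm] at hw
          obtain ⟨u, hu, v, hv, rfl⟩ := hmul_add x a b hw
          rw [hmul_comm] at hu hv
          have hLne : List.replicate i a ++ List.replicate (N - i) b ≠ [] :=
            append_rep_ne_nil (by omega) a b
          have hu' : u ∈ T (N+1) := by
            refine ⟨i + 1, by omega, ?_⟩
            have hNi : N + 1 - (i + 1) = N - i := by omega
            rw [hNi, List.replicate_succ, List.cons_append]
            rw [hProd_cons a hLne]
            exact Set.mem_biUnion hxP hu
          have hv' : v ∈ T (N+1) := by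
            refine ⟨i, by omega, ?_⟩
            have hNi : N + 1 - i = (N - i) + 1 := by omega
            have hperm : hProd (b :: (List.replicate i a ++ List.replicate (N - i) b))
                = hProd (List.replicate i a ++ List.replicate (N + 1 - i) b) := by
              refine hProd_perm ?_
              rw [hNi, List.replicate_succ]
              exact List.perm_middle.symm
            rw [← hperm, hProd_cons b hLne]
            exact Set.mem_biUnion hxP hv
          exact AddSubsemigroup.add_mem _ (AddSubsemigroup.subset_closure hu')
            (AddSubsemigroup.subset_closure hv')
        | add x y hx hy px py =>
          intro w hw
          obtain ⟨u, hu, v, hv, rfl⟩ := hmul_add (a + b) x y hw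
          exact AddSubsemigroup.add_mem _ (px hu) (py hv)
      rw [hPow_succ _ hN]
      intro w hw
      simp only [smulSet, Set.mem_iUnion] at hw
      obtain ⟨z, hz, hw⟩ := hw
      exact key z (ih hN hz) hw
    · have hN0 : N = 0 := by omega
      subst hN0
      rw [hPow_one]
      intro w hw
      rw [Set.mem_singleton_iff] at hw
      subst hw
      have ha : a ∈ T 1 := ⟨1, le_refl 1, by simp [hProd_singleton]⟩
      have hb : b ∈ T 1 := ⟨0, by omega, by simp [hProd_singleton]⟩
      exact AddSubsemigroup.add_mem _ (AddSubsemigroup.subset_closure ha)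
        (AddSubsemigroup.subset_closure hb)

lemma rad_isHyperideal {A : Set G} (hA : IsHyperideal A) : IsHyperideal (rad A) := by
  refine ⟨?_, ?_, ?_⟩
  · obtain ⟨a, ha⟩ := hA.1
    exact ⟨a, 1, le_refl 1, by rw [hPow_one]; exact Set.singleton_subset_iff.mpr ha⟩
  · rintro x ⟨m, hm, hxm⟩ y ⟨n, hn, hyn⟩
    refine ⟨m + n, by omega, ?_⟩
    rw [sub_eq_add_neg]
    have hbin := hPow_add_subset x (-y) (m + n) (by omega)
    refine hbin.trans ?_
    have hyn' : hPow (-y) n ⊆ A := hPow_neg_subset hA hn hyn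
    have hTA : {w : G | ∃ i, i ≤ m + n ∧
        w ∈ hProd (List.replicate i x ++ List.replicate (m + n - i) (-y))} ⊆ A := by
      rintro w ⟨i, hiN, hw⟩
      by_cases him : m ≤ i
      · have h1 : List.replicate i x = List.replicate (i - m) x ++ List.replicate m x := by
          rw [← List.replicate_add]; congr 1; omega
        rw [h1, List.append_assoc] at hw
        have hperm : hProd (List.replicate (i-m) x ++
              (List.replicate m x ++ List.replicate (m+n-i) (-y)))
            = hProd ((List.replicate (i-m) x ++ List.replicate (m+n-i) (-y)) ++
              List.replicate m x) := by
          refine hProd_perm ?_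
          rw [List.append_assoc]
          exact List.Perm.append_left _ List.perm_append_comm
        rw [hperm] at hw
        exact hProd_append_subset_of_right hA _ (replicate_ne_nil' hm x) hxm hw
      · have h1 : List.replicate (m+n-i) (-y)
            = List.replicate (m+n-i-n) (-y) ++ List.replicate n (-y) := by
          rw [← List.replicate_add]; congr 1; omega
        rw [h1, ← List.append_assoc] at hw
        exact hProd_append_subset_of_right hA _ (replicate_ne_nil' hn (-y)) hyn' hw
    intro w hw
    refine AddSubsemigroup.closure_induction (fun z hz => hTA hz)
      (fun z₁ z₂ _ _ h1 h2 => add_mem_of hA h1 h2) hw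
  · intro r x hx
    obtain ⟨n, hn, hxn⟩ := hx
    intro z hz
    refine ⟨n, hn, ?_⟩
    exact (hPow_subset_pair hz n hn).trans
      (hProd_append_subset_of_right hA _ (replicate_ne_nil' hn x) hxn)

lemma hPow_inter_mcs {S : Set G} (hS : IsMCS S) {s : G} (hs : s ∈ S) :
    ∀ n, 1 ≤ n → (hPow s n ∩ S).Nonempty := by
  intro n
  induction n with
  | zero => omega
  | succ n ih =>
    intro _
    by_cases hn : 1 ≤ n
    · obtain ⟨x, hx, hxS⟩ := ih hn
      obtain ⟨y, hy⟩ := hS.2 s hs x hxS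
      exact ⟨y, by rw [hPow_succ _ hn]; exact Set.mem_biUnion hx hy.1, hy.2⟩
    · have hn0 : n = 0 := by omega
      subst hn0
      exact ⟨s, by rw [hPow_one]; exact rfl, hs⟩

lemma key_aux {A : Set G} (hA : IsCHyperideal A) {t u x₀ : G} {n : ℕ} (hn : 1 ≤ n)
    (hx : x₀ ∈ hPow u n) (h : hmul t x₀ ⊆ rad A) : hmul t u ⊆ rad A := by
  obtain ⟨s₀, hs₀⟩ := hmul_nonempty t x₀
  obtain ⟨m, hm, hsm⟩ := h hs₀
  have h1 := hPow_subset_pair hs₀ m hm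
  have h2 := hProd_append_replicate_subset hn hx m (List.replicate m t)
  have hmn : 1 ≤ m * n := Nat.one_le_iff_ne_zero.mpr (Nat.mul_ne_zero (by omega) (by omega))
  have hQ : hProd (List.replicate m t ++ List.replicate (m * n) u) ⊆ A := by
    refine hA.2 _ (append_rep_ne_nil (by omega) t u) ?_
    obtain ⟨y, hy⟩ := hPow_nonempty s₀ hm
    exact ⟨y, h2 (h1 hy), hsm hy⟩
  intro z hz
  refine ⟨m * n, hmn, ?_⟩
  refine (hPow_subset_pair hz (m * n) hmn).trans ?_
  have hle : m ≤ m * n := Nat.le_mul_of_pos_right m (by omega)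
  have heq : List.replicate (m * n) t
      = List.replicate (m * n - m) t ++ List.replicate m t := by
    rw [← List.replicate_add]; congr 1; omega
  rw [heq, List.append_assoc]
  exact hProd_append_subset_of_right hA.1 _
    (append_rep_ne_nil (by omega) t u) hQ

lemma subset_rad {A : Set G} : A ⊆ rad A := fun a ha =>
  ⟨1, le_refl 1, by rw [hPow_one]; exact Set.singleton_subset_iff.mpr ha⟩

end MulHyperring

open MulHyperring in
theorem quasiSPrimary_iff_rad_sPrime {G : Type*} [MulHyperring G] (A S : Set G) (hA : IsCHyperideal A)
    (hS : IsMCS S) (hAS : A ∩ S = ∅) :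
    IsQuasiSPrimary S A ↔ IsSPrime S (rad A) := by
  constructor
  · rintro ⟨hid, -, t, htS, hq⟩
    refine ⟨rad_isHyperideal hA.1, ?_, t, htS, ?_⟩
    · rw [Set.eq_empty_iff_forall_notMem]
      rintro a ⟨⟨n, hn, han⟩, haS⟩
      obtain ⟨y, hy1, hy2⟩ := hPow_inter_mcs hS haS n hn
      have : y ∈ A ∩ S := ⟨han hy1, hy2⟩
      rw [hAS] at this
      exact this
    · intro u v huv
      obtain ⟨w, hw⟩ := hmul_nonempty u v
      obtain ⟨n, hn, hwn⟩ := huv hw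
      have hP : hProd (List.replicate n u ++ List.replicate n v) ⊆ A := by
        refine hA.2 _ (append_rep_ne_nil (by omega) u v) ?_
        obtain ⟨z, hz⟩ := hPow_nonempty w hn
        exact ⟨z, hPow_subset_pair hw n hn hz, hwn hz⟩
      obtain ⟨x₀, hx₀⟩ := hPow_nonempty u hn
      obtain ⟨y₀, hy₀⟩ := hPow_nonempty v hn
      have hxy : hmul x₀ y₀ ⊆ A := by
        refine subset_trans ?_ hP
        have hc : hmul x₀ y₀ ⊆ hProd (x₀ :: List.replicate n v) := by
          rw [hProd_cons _ (replicate_ne_nil' hn v)]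
          exact fun q hq => Set.mem_biUnion hy₀ hq
        exact hc.trans (hProd_cons_subset hx₀ (replicate_ne_nil' hn u) _)
      rcases hq x₀ y₀ hxy with h | h
      · exact Or.inl (key_aux hA hn hx₀ h)
      · exact Or.inr (key_aux hA hn hy₀ h)
  · rintro ⟨hrid, hrS, t, htS, hp⟩
    exact ⟨hA.1, hAS, t, htS, fun u v huv => hp u v (huv.trans subset_rad)⟩
end

section
/- Let A and B be C-hyperideals of a commutative multiplicative hyperring G and S an MCS of G with B ∩ S ≠ ∅. If A is a quasi S-primary hyperideal of G, then both B∘A and A ∩ B are quasi S-primary hyperideals of G. -/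
open Set

namespace MulHyperringAux

open MulHyperring

variable {G : Type*} [MulHyperring G]

lemma setMul_comm (A B : Set G) : setMul A B = setMul B A := by
  simp only [setMul]
  ext x
  simp only [mem_iUnion]
  constructor
  · rintro ⟨a, ha, b, hb, hx⟩
    exact ⟨b, hb, a, ha, by rwa [hmul_comm]⟩
  · rintro ⟨b, hb, a, ha, hx⟩
    exact ⟨a, ha, b, hb, by rwa [hmul_comm]⟩

lemma setMul_assoc (A B C : Set G) : setMul (setMul A B) C = setMul A (setMul B C) := by
  ext z
  simp only [setMul, mem_iUnion]
  constructor
  · rintro ⟨x, ⟨a, ha, b, hb, hx⟩, c, hc, hz⟩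
    have key := hmul_assoc a b c
    have : z ∈ ⋃ x ∈ hmul a b, hmul x c := mem_biUnion hx hz
    rw [key] at this
    rcases mem_iUnion₂.mp this with ⟨w, hw, hz'⟩
    exact ⟨a, ha, w, ⟨b, hb, c, hc, hw⟩, hz'⟩
  · rintro ⟨a, ha, w, ⟨b, hb, c, hc, hw⟩, hz⟩
    have key := hmul_assoc a b c
    have : z ∈ ⋃ x ∈ hmul b c, hmul a x := mem_biUnion hw hz
    rw [← key] at this
    rcases mem_iUnion₂.mp this with ⟨x, hx, hz'⟩
    exact ⟨x, ⟨a, ha, b, hb, hx⟩, c, hc, hz'⟩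

lemma setMul_mono {A B C D : Set G} (h1 : A ⊆ C) (h2 : B ⊆ D) : setMul A B ⊆ setMul C D := by
  intro z hz
  rcases mem_iUnion₂.mp hz with ⟨a, ha, hz⟩
  rcases mem_iUnion₂.mp hz with ⟨b, hb, hz⟩
  exact mem_biUnion (h1 ha) (mem_biUnion (h2 hb) hz)

lemma setMul_singleton (a b : G) : setMul {a} {b} = hmul a b := by
  simp [setMul]

lemma smulSet_eq (a : G) (B : Set G) : smulSet a B = setMul {a} B := by
  simp [smulSet, setMul]

lemma hPow_one (a : G) : hPow a 1 = {a} := rfl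

lemma hPow_succ (a : G) (n : ℕ) (hn : 1 ≤ n) :
    hPow a (n + 1) = setMul {a} (hPow a n) := by
  obtain ⟨m, rfl⟩ : ∃ m, n = m + 1 := ⟨n - 1, by omega⟩
  rw [← smulSet_eq]
  rfl

lemma hPow_subset_of_mem {z x s : G} (hz : z ∈ hmul x s) :
    ∀ n : ℕ, 1 ≤ n → hPow z n ⊆ setMul (hPow x n) (hPow s n) := by
  intro n hn
  induction n with
  | zero => omega
  | succ n ih =>
    rcases Nat.eq_zero_or_pos n with rfl | hn1
    · rw [hPow_one, hPow_one, hPow_one, setMul_singleton]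
      simpa using hz
    · rw [hPow_succ z n hn1, hPow_succ x n hn1, hPow_succ s n hn1]
      calc setMul {z} (hPow z n) ⊆ setMul (hmul x s) (setMul (hPow x n) (hPow s n)) :=
            setMul_mono (by simpa using hz) (ih hn1)
        _ = setMul (setMul {x} {s}) (setMul (hPow x n) (hPow s n)) := by
            rw [setMul_singleton]
        _ = setMul (setMul {x} (hPow x n)) (setMul {s} (hPow s n)) := by
            rw [setMul_assoc, setMul_assoc, ← setMul_assoc {s}, setMul_comm {s} (hPow x n),
              setMul_assoc]

lemma hPow_subset_ideal {B : Set G} (hB : IsHyperideal B) {s : G} (hs : s ∈ B) :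
    ∀ n : ℕ, 1 ≤ n → hPow s n ⊆ B := by
  intro n hn
  induction n with
  | zero => omega
  | succ n ih =>
    rcases Nat.eq_zero_or_pos n with rfl | hn1
    · rw [hPow_one]; simpa using hs
    · rw [hPow_succ s n hn1]
      intro z hz
      rcases mem_iUnion₂.mp hz with ⟨a, ha, hz⟩
      rcases mem_iUnion₂.mp hz with ⟨b, hb, hz⟩
      simp only [mem_singleton_iff] at ha
      exact hB.2.2 a b (ih hn1 hb) hz

lemma zero_mem_hyperideal {A : Set G} (hA : IsHyperideal A) : (0 : G) ∈ A := by
  obtain ⟨a, ha⟩ := hA.1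
  simpa using hA.2.1 a ha a ha

lemma mem_idealGen {X : Set G} {x : G} :
    x ∈ idealGen X ↔ ∀ A : Set G, IsHyperideal A ∧ X ⊆ A → x ∈ A := by
  simp [idealGen, mem_sInter, mem_setOf_eq]

lemma idealGen_isHyperideal (X : Set G) : IsHyperideal (idealGen X) := by
  refine ⟨⟨0, mem_idealGen.mpr fun A hA => zero_mem_hyperideal hA.1⟩, ?_, ?_⟩
  · intro x hx y hy
    exact mem_idealGen.mpr fun A hA =>
      hA.1.2.1 x (mem_idealGen.mp hx A hA) y (mem_idealGen.mp hy A hA)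
  · intro r x hx z hz
    exact mem_idealGen.mpr fun A hA => hA.1.2.2 r x (mem_idealGen.mp hx A hA) hz

lemma subset_idealGen (X : Set G) : X ⊆ idealGen X := by
  intro x hx
  exact mem_idealGen.mpr fun A hA => hA.2 hx

lemma idealGen_subset {X A : Set G} (hA : IsHyperideal A) (h : X ⊆ A) : idealGen X ⊆ A :=
  fun _ hx => mem_idealGen.mp hx A ⟨hA, h⟩

lemma setMul_subset_left {A B : Set G} (hA : IsHyperideal A) : setMul B A ⊆ A := by
  intro z hz
  rcases mem_iUnion₂.mp hz with ⟨b, hb, hz⟩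
  rcases mem_iUnion₂.mp hz with ⟨a, ha, hz⟩
  exact hA.2.2 b a ha hz

lemma idealMul_subset {A B : Set G} (hA : IsHyperideal A) (hB : IsHyperideal B) :
    idealMul B A ⊆ A ∩ B := by
  refine idealGen_subset ⟨⟨(0 : G), zero_mem_hyperideal hA, zero_mem_hyperideal hB⟩, ?_, ?_⟩ ?_
  · intro x hx y hy
    exact ⟨hA.2.1 x hx.1 y hy.1, hB.2.1 x hx.2 y hy.2⟩
  · intro r x hx
    exact subset_inter (hA.2.2 r x hx.1) (hB.2.2 r x hx.2)
  · intro z hz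
    rcases mem_iUnion₂.mp hz with ⟨b, hb, hz⟩
    rcases mem_iUnion₂.mp hz with ⟨a, ha, hz⟩
    exact ⟨hA.2.2 b a ha hz, by rw [hmul_comm] at hz; exact hB.2.2 a b hb hz⟩

lemma rad_mono {A B : Set G} (h : A ⊆ B) : rad A ⊆ rad B := by
  rintro x ⟨n, hn, hx⟩
  exact ⟨n, hn, hx.trans h⟩

/-- key lemma: rad A ∘ B ⊆ rad (B∘A) -/
lemma hmul_rad_subset {A B : Set G} (hB : IsHyperideal B) {x s : G}
    (hx : x ∈ rad A) (hs : s ∈ B) : hmul x s ⊆ rad (idealMul B A) := by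
  intro z hz
  obtain ⟨n, hn, hxn⟩ := hx
  refine ⟨n, hn, ?_⟩
  calc hPow z n ⊆ setMul (hPow x n) (hPow s n) := hPow_subset_of_mem hz n hn
    _ ⊆ idealMul B A := by
        intro w hw
        rcases mem_iUnion₂.mp hw with ⟨p, hp, hw⟩
        rcases mem_iUnion₂.mp hw with ⟨q, hq, hw⟩
        apply subset_idealGen
        have hpA : p ∈ A := hxn hp
        have hqB : q ∈ B := hPow_subset_ideal hB hs n hn hq
        rw [hmul_comm] at hw
        exact mem_biUnion hqB (mem_biUnion hpA hw)

end MulHyperringAux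


open MulHyperringAux in
open MulHyperring in
theorem quasiSPrimary_idealMul_and_inter {G : Type*} [MulHyperring G] (A B S : Set G)
    (hA : IsCHyperideal A) (hB : IsCHyperideal B) (hS : IsMCS S)
    (hBS : (B ∩ S).Nonempty) (h : IsQuasiSPrimary S A) :
    IsQuasiSPrimary S (idealMul B A) ∧ IsQuasiSPrimary S (A ∩ B) := by
  obtain ⟨hAI, hAS, t, htS, ht⟩ := h
  obtain ⟨s, hsB, hsS⟩ := hBS
  obtain ⟨t', ht'ts, ht'S⟩ := hS.2 t htS s hsS
  have hsub : idealMul B A ⊆ A ∩ B := idealMul_subset hA.1 hB.1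
  have key : ∀ p u : G, p ∈ hmul t s → hmul t u ⊆ rad A →
      hmul p u ⊆ rad (idealMul B A) := by
    intro p u hp htu z hz
    have hp' : p ∈ hmul s t := by rwa [hmul_comm]
    have h1 : z ∈ ⋃ x ∈ hmul s t, hmul x u := mem_biUnion hp' hz
    rw [hmul_assoc s t u] at h1
    rcases mem_iUnion₂.mp h1 with ⟨x, hx, hz'⟩
    have hxs : hmul x s ⊆ rad (idealMul B A) := hmul_rad_subset hB.1 (htu hx) hsB
    exact hxs (by rwa [hmul_comm])
  have hdisj : ∀ C : Set G, C ⊆ A → C ∩ S = ∅ := by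
    intro C hC
    rw [← subset_empty_iff, ← hAS]
    exact inter_subset_inter_left S hC
  constructor
  · refine ⟨idealGen_isHyperideal _, hdisj _ (hsub.trans inter_subset_left), t', ht'S, ?_⟩
    intro u v huv
    rcases ht u v (huv.trans (hsub.trans inter_subset_left)) with h' | h'
    · exact Or.inl (key t' u ht'ts h')
    · exact Or.inr (key t' v ht'ts h')
  · have hABI : IsHyperideal (A ∩ B) :=
      ⟨⟨(0 : G), zero_mem_hyperideal hA.1, zero_mem_hyperideal hB.1⟩,
        fun x hx y hy => ⟨hA.1.2.1 x hx.1 y hy.1, hB.1.2.1 x hx.2 y hy.2⟩,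
        fun r x hx => subset_inter (hA.1.2.2 r x hx.1) (hB.1.2.2 r x hx.2)⟩
    refine ⟨hABI, hdisj _ inter_subset_left, t', ht'S, ?_⟩
    intro u v huv
    have hmono := rad_mono hsub
    rcases ht u v (huv.trans inter_subset_left) with h' | h'
    · exact Or.inl ((key t' u ht'ts h').trans hmono)
    · exact Or.inr ((key t' v ht'ts h').trans hmono)
end

section
/- Let S₁ ⊆ S₂ be two multiplicative closed subsets of a commutative multiplicative hyperring G such that for every t ∈ S₂ there exists s ∈ S₁ with (t∘s) ∩ S₁ ≠ ∅, and let A be a C-hyperideal of G with A ∩ S₂ = ∅. Then A is a quasi S₁-primary hyperideal of G if and only if A is a quasi S₂-primary hyperideal of G. -/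
open Set

section Aux
open MulHyperring
variable {G : Type*} [MulHyperring G]

lemma mem_hmul_assoc {a b c x y : G} (hx : x ∈ hmul a b)
    (hy : y ∈ hmul x c) : ∃ z ∈ hmul b c, y ∈ hmul a z := by
  have h := hmul_assoc a b c
  have hmem : y ∈ ⋃ x ∈ hmul a b, hmul x c := Set.mem_biUnion hx hy
  rw [h] at hmem
  simpa using hmem

lemma mem_hmul_assoc' {a b c z y : G} (hz : z ∈ hmul b c) (hy : y ∈ hmul a z) :
    ∃ x ∈ hmul a b, y ∈ hmul x c := by
  have h := hmul_assoc a b c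
  have hmem : y ∈ ⋃ z ∈ hmul b c, hmul a z := Set.mem_biUnion hz hy
  rw [← h] at hmem
  simpa using hmem

lemma hPow_succ_eq (z : G) (n : ℕ) (hn : 1 ≤ n) :
    hPow z (n + 1) = smulSet z (hPow z n) := by
  obtain ⟨m, rfl⟩ := Nat.exists_eq_add_of_le hn
  rw [show 1 + m = m + 1 by omega]
  simp only [hPow, List.replicate_succ]
  rfl

lemma hPow_subset_setMul {s w z : G} (hz : z ∈ hmul s w) :
    ∀ n, 1 ≤ n → hPow z n ⊆ setMul (hPow s n) (hPow w n) := by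
  intro n
  induction n with
  | zero => intro h; omega
  | succ n ih =>
    intro _
    rcases Nat.eq_or_lt_of_le (Nat.zero_le n) with h0 | h0
    · subst_vars
      simp only [hPow, hProd, setMul]
      intro x hx
      simp only [List.replicate_succ, List.replicate_zero, hProd, Set.mem_singleton_iff] at hx
      subst hx
      exact Set.mem_biUnion rfl (Set.mem_biUnion rfl hz)
    · have hn : 1 ≤ n := h0
      rw [hPow_succ_eq z n hn, hPow_succ_eq s n hn, hPow_succ_eq w n hn]
      intro x hx
      simp only [smulSet, Set.mem_iUnion, exists_prop] at hx
      obtain ⟨y, hy, hxy⟩ := hx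
      have hy' := ih hn hy
      simp only [setMul, Set.mem_iUnion, exists_prop] at hy'
      obtain ⟨a, ha, b, hb, hyab⟩ := hy'
      obtain ⟨d, hd, hxd⟩ := mem_hmul_assoc hz hxy
      rw [hmul_comm w y] at hd
      obtain ⟨e, he, hde⟩ := mem_hmul_assoc hyab hd
      obtain ⟨p, hp, hxp⟩ := mem_hmul_assoc' hde hxd
      have hpmem : p ∈ smulSet s (hPow s n) := Set.mem_biUnion ha hp
      have hemem : e ∈ smulSet w (hPow w n) := by
        rw [hmul_comm b w] at he
        exact Set.mem_biUnion hb he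
      exact Set.mem_biUnion hpmem (Set.mem_biUnion hemem hxp)

lemma hmul_subset_rad {A : Set G} (hA : IsHyperideal A) {s w : G} (hw : w ∈ rad A) :
    hmul s w ⊆ rad A := by
  obtain ⟨n, hn, hwn⟩ := hw
  intro z hz
  refine ⟨n, hn, ?_⟩
  intro x hx
  have := hPow_subset_setMul hz n hn hx
  simp only [setMul, Set.mem_iUnion, exists_prop] at this
  obtain ⟨a, ha, b, hb, hxab⟩ := this
  exact hA.2.2 a b (hwn hb) hxab

end Aux

open MulHyperring in
theorem quasiSPrimary_S1_iff_S2 {G : Type*} [MulHyperring G] (S₁ S₂ A : Set G)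
    (hS₁ : IsMCS S₁) (hS₂ : IsMCS S₂) (hsub : S₁ ⊆ S₂)
    (hcond : ∀ t ∈ S₂, ∃ s ∈ S₁, (hmul t s ∩ S₁).Nonempty)
    (hA : IsCHyperideal A) (hAS : A ∩ S₂ = ∅) :
    IsQuasiSPrimary S₁ A ↔ IsQuasiSPrimary S₂ A := by
  constructor
  · rintro ⟨hid, -, t, htS, hprop⟩
    exact ⟨hid, hAS, t, hsub htS, hprop⟩
  · rintro ⟨hid, -, t, htS, hprop⟩
    have hAS₁ : A ∩ S₁ = ∅ := by
      have h := Set.inter_subset_inter_right A hsub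
      rw [hAS] at h
      exact Set.subset_empty_iff.mp h
    obtain ⟨s, hsS, t', ht'mem⟩ := hcond t htS
    refine ⟨hid, hAS₁, t', ht'mem.2, ?_⟩
    have ht'st : t' ∈ hmul s t := by rw [hmul_comm]; exact ht'mem.1
    intro u v huv
    rcases hprop u v huv with h1 | h1
    · left
      intro x hx
      obtain ⟨w, hw, hxw⟩ := mem_hmul_assoc ht'st hx
      exact hmul_subset_rad hid (h1 hw) hxw
    · right
      intro x hx
      obtain ⟨w, hw, hxw⟩ := mem_hmul_assoc ht'st hx
      exact hmul_subset_rad hid (h1 hw) hxw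
end

section
/- Let A₁,…,A_k be quasi S-primary C-hyperideals of a commutative multiplicative hyperring G with rad(A_i) = rad(A_j) for all i,j. Then A = ⋂_{i=1}^k A_i is a quasi S-primary hyperideal of G. -/
open Set

open MulHyperring in
lemma MulHyperring.zero_mem_hyperideal {G : Type*} [MulHyperring G] {A : Set G}
    (h : IsHyperideal A) : (0:G) ∈ A := by
  obtain ⟨⟨x, hx⟩, hsub, _⟩ := h
  simpa using hsub x hx x hx

open MulHyperring in
lemma MulHyperring.hPow_le {G : Type*} [MulHyperring G] {A : Set G} (h : IsHyperideal A)
    {a : G} {m n : ℕ} (hm : 1 ≤ m) (hmn : m ≤ n) (hsub : hPow a m ⊆ A) : hPow a n ⊆ A := by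
  induction n with
  | zero => omega
  | succ n ih =>
    rcases eq_or_lt_of_le hmn with rfl | h'
    · exact hsub
    · have hn : 1 ≤ n := by omega
      have hAn : hPow a n ⊆ A := ih (by omega)
      obtain ⟨p, rfl⟩ : ∃ p, n = p + 1 := ⟨n - 1, by omega⟩
      have heq : hPow a (p + 2) = smulSet a (hPow a (p + 1)) := rfl
      rw [heq]
      intro x hx
      simp only [smulSet, Set.mem_iUnion] at hx
      obtain ⟨b, hb, hxb⟩ := hx
      exact h.2.2 a b (hAn hb) hxb

open MulHyperring in
theorem quasiSPrimary_iInter {G : Type*} [MulHyperring G] (S : Set G) (hS : IsMCS S)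
    (k : ℕ) (hk : 0 < k) (A : Fin k → Set G) (hA : ∀ i, IsCHyperideal (A i))
    (hq : ∀ i, IsQuasiSPrimary S (A i)) (hrad : ∀ i j, rad (A i) = rad (A j)) :
    IsQuasiSPrimary S (⋂ i, A i) := by
  have hIdeals : ∀ i, IsHyperideal (A i) := fun i => (hA i).1
  have hIdeal : IsHyperideal (⋂ i, A i) := by
    refine ⟨⟨0, Set.mem_iInter.2 fun i => zero_mem_hyperideal (hIdeals i)⟩, ?_, ?_⟩
    · intro x hx y hy
      exact Set.mem_iInter.2 fun i =>
        (hIdeals i).2.1 x (Set.mem_iInter.1 hx i) y (Set.mem_iInter.1 hy i)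
    · intro r x hx z hz
      exact Set.mem_iInter.2 fun i => (hIdeals i).2.2 r x (Set.mem_iInter.1 hx i) hz
  have hradEq : rad (⋂ i, A i) = rad (A ⟨0, hk⟩) := by
    apply Set.Subset.antisymm
    · rintro a ⟨n, hn, hsub⟩
      exact ⟨n, hn, hsub.trans (Set.iInter_subset A _)⟩
    · rintro a ⟨n0, hn0, hsub0⟩
      have h : ∀ i, ∃ n, 1 ≤ n ∧ hPow a n ⊆ A i := by
        intro i
        have hai : a ∈ rad (A i) := by
          rw [hrad i ⟨0, hk⟩]; exact ⟨n0, hn0, hsub0⟩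
        exact hai
      choose n hn1 hn2 using h
      refine ⟨Finset.univ.sup n, ?_, ?_⟩
      · exact le_trans (hn1 ⟨0, hk⟩) (Finset.le_sup (Finset.mem_univ _))
      · refine Set.subset_iInter fun i => ?_
        exact hPow_le (hIdeals i) (hn1 i) (Finset.le_sup (Finset.mem_univ i)) (hn2 i)
  obtain ⟨_, hdis0, t, htS, ht⟩ := hq ⟨0, hk⟩
  refine ⟨hIdeal, ?_, t, htS, ?_⟩
  · have hsub : (⋂ i, A i) ∩ S ⊆ A ⟨0, hk⟩ ∩ S :=
      Set.inter_subset_inter_left S (Set.iInter_subset A _)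
    rw [hdis0] at hsub
    exact Set.subset_empty_iff.1 hsub
  · intro u v huv
    rcases ht u v (huv.trans (Set.iInter_subset A _)) with h | h
    · left; rw [hradEq]; exact h
    · right; rw [hradEq]; exact h
end

section
/- Let G₁, G₂ be commutative multiplicative hyperrings, η : G₁ → G₂ a hyperring good homomorphism, A₂ a C-hyperideal of G₂, and S an MCS of G₁ with 0 ∉ η(S). If A₂ is a quasi η(S)-primary hyperideal of G₂, then η⁻¹(A₂) is a quasi S-primary hyperideal of G₁. -/
open Set

namespace MulHyperring

/-- A hyperring good homomorphism. -/
structure IsGoodHom {G₁ G₂ : Type*} [MulHyperring G₁] [MulHyperring G₂]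
    (η : G₁ → G₂) : Prop where
  map_add : ∀ a b : G₁, η (a + b) = η a + η b
  map_hmul : ∀ a b : G₁, η '' (hmul a b) = hmul (η a) (η b)
  map_e : η (e : G₁) = (e : G₂)

end MulHyperring

section Aux
open MulHyperring

variable {G₁ G₂ : Type*} [MulHyperring G₁] [MulHyperring G₂] {η : G₁ → G₂}

lemma goodHom_map_zero (hη : IsGoodHom η) : η 0 = 0 := by
  have := hη.map_add 0 0
  simpa using this.symm

lemma goodHom_map_sub (hη : IsGoodHom η) (a b : G₁) : η (a - b) = η a - η b := by
  have h1 : η (a - b) + η b = η a := by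
    rw [← hη.map_add, sub_add_cancel]
  exact eq_sub_of_add_eq h1

lemma goodHom_image_hProd (hη : IsGoodHom η) :
    ∀ l : List G₁, η '' hProd l = hProd (l.map η)
  | [] => by simp [hProd]
  | [a] => by simp [hProd]
  | a :: b :: l => by
    have ih := goodHom_image_hProd hη (b :: l)
    simp only [List.map_cons, hProd, smulSet] at *
    rw [Set.image_iUnion₂]
    rw [← ih]
    ext z
    simp only [Set.mem_iUnion, Set.mem_image]
    constructor
    · rintro ⟨x, hx, hz⟩
      exact ⟨η x, ⟨x, hx, rfl⟩, by rw [← hη.map_hmul]; exact hz⟩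
    · rintro ⟨y, ⟨x, hx, rfl⟩, hz⟩
      rw [← hη.map_hmul] at hz
      obtain ⟨w, hw, rfl⟩ := hz
      exact ⟨x, hx, w, hw, rfl⟩

lemma goodHom_image_hPow (hη : IsGoodHom η) (a : G₁) (n : ℕ) :
    η '' hPow a n = hPow (η a) n := by
  rw [hPow, hPow, goodHom_image_hProd hη, List.map_replicate]

lemma goodHom_preimage_rad (hη : IsGoodHom η) (A₂ : Set G₂) :
    η ⁻¹' rad A₂ ⊆ rad (η ⁻¹' A₂) := by
  rintro a ⟨n, hn, hpow⟩
  refine ⟨n, hn, fun x hx => ?_⟩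
  have : η x ∈ hPow (η a) n := by
    rw [← goodHom_image_hPow hη]; exact ⟨x, hx, rfl⟩
  exact hpow this

end Aux

open MulHyperring in
theorem quasiSPrimary_preimage {G₁ G₂ : Type*} [MulHyperring G₁] [MulHyperring G₂]
    (η : G₁ → G₂) (hη : IsGoodHom η) (A₂ : Set G₂) (hA₂ : IsCHyperideal A₂)
    (S : Set G₁) (hS : IsMCS S) (h0 : (0 : G₂) ∉ η '' S)
    (h : IsQuasiSPrimary (η '' S) A₂) :
    IsQuasiSPrimary S (η ⁻¹' A₂) := by
  obtain ⟨⟨hne, hsub, hr⟩, hdisj, t₂, ht₂S, ht₂⟩ := h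
  refine ⟨⟨?_, ?_, ?_⟩, ?_, ?_⟩
  · -- nonempty: 0 ∈ η⁻¹ A₂
    obtain ⟨x, hx⟩ := hne
    have h0A : (0 : G₂) ∈ A₂ := by simpa using hsub x hx x hx
    exact ⟨0, by simp [Set.mem_preimage, goodHom_map_zero hη, h0A]⟩
  · intro x hx y hy
    simp only [Set.mem_preimage] at *
    rw [goodHom_map_sub hη]
    exact hsub _ hx _ hy
  · intro r x hx z hz
    have : η z ∈ hmul (η r) (η x) := by rw [← hη.map_hmul]; exact ⟨z, hz, rfl⟩
    exact hr (η r) (η x) hx this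
  · ext s
    simp only [Set.mem_inter_iff, Set.mem_preimage, Set.mem_empty_iff_false, iff_false,
      not_and]
    intro hA hsS
    have : η s ∈ A₂ ∩ (η '' S) := ⟨hA, ⟨s, hsS, rfl⟩⟩
    rw [hdisj] at this
    exact this
  · obtain ⟨t, htS, rfl⟩ := ht₂S
    refine ⟨t, htS, fun u v huv => ?_⟩
    have huv₂ : hmul (η u) (η v) ⊆ A₂ := by
      rw [← hη.map_hmul]
      rintro _ ⟨z, hz, rfl⟩
      exact huv hz
    rcases ht₂ (η u) (η v) huv₂ with hc | hc
    · left
      intro z hz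
      apply goodHom_preimage_rad hη A₂
      apply hc
      rw [← hη.map_hmul]
      exact ⟨z, hz, rfl⟩
    · right
      intro z hz
      apply goodHom_preimage_rad hη A₂
      apply hc
      rw [← hη.map_hmul]
      exact ⟨z, hz, rfl⟩
end

section
/- Let G₁, G₂ be commutative multiplicative hyperrings, η : G₁ → G₂ a surjective hyperring good homomorphism, A₁ a C-hyperideal of G₁ with Ker(η) ⊆ A₁, and S an MCS of G₁ with 0 ∉ η(S). If A₁ is a quasi S-primary hyperideal of G₁, then η(A₁) is a quasi η(S)-primary hyperideal of G₂. -/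
open Set

namespace MulHyperring

variable {G₁ G₂ : Type*} [MulHyperring G₁] [MulHyperring G₂] {η : G₁ → G₂}

theorem IsGoodHom.map_zero (hη : IsGoodHom η) : η 0 = 0 := by
  have h : η 0 + η 0 = η 0 + 0 := by rw [add_zero, ← hη.map_add, add_zero]
  exact add_left_cancel h

theorem IsGoodHom.map_neg (hη : IsGoodHom η) (a : G₁) : η (-a) = -η a := by
  have h := hη.map_add a (-a)
  rw [add_neg_cancel, hη.map_zero] at h
  exact (eq_neg_of_add_eq_zero_right h.symm)

theorem IsGoodHom.map_sub (hη : IsGoodHom η) (a b : G₁) : η (a - b) = η a - η b := by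
  rw [sub_eq_add_neg, hη.map_add, hη.map_neg, sub_eq_add_neg]

theorem IsGoodHom.image_smulSet (hη : IsGoodHom η) (a : G₁) (B : Set G₁) :
    η '' smulSet a B = smulSet (η a) (η '' B) := by
  ext y
  simp only [smulSet, Set.mem_image, Set.mem_iUnion]
  constructor
  · rintro ⟨x, ⟨b, hb, hx⟩, rfl⟩
    exact ⟨η b, ⟨b, hb, rfl⟩, (hη.map_hmul a b) ▸ ⟨x, hx, rfl⟩⟩
  · rintro ⟨c, ⟨b, hb, rfl⟩, hy⟩
    rw [← hη.map_hmul a b] at hy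
    obtain ⟨x, hx, rfl⟩ := hy
    exact ⟨x, ⟨b, hb, hx⟩, rfl⟩

theorem IsGoodHom.image_hProd (hη : IsGoodHom η) :
    ∀ l : List G₁, η '' hProd l = hProd (l.map η)
  | [] => by simp [hProd]
  | [a] => by simp [hProd]
  | a :: b :: l => by
    rw [List.map_cons, List.map_cons]
    show η '' smulSet a (hProd (b :: l)) = smulSet (η a) (hProd (η b :: l.map η))
    rw [hη.image_smulSet, hη.image_hProd (b :: l), List.map_cons]

theorem IsGoodHom.image_rad (hη : IsGoodHom η) (A : Set G₁) :
    η '' rad A ⊆ rad (η '' A) := by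
  rintro _ ⟨a, ⟨n, hn, ha⟩, rfl⟩
  refine ⟨n, hn, ?_⟩
  have : hPow (η a) n = η '' hPow a n := by
    unfold hPow
    rw [hη.image_hProd, List.map_replicate]
  rw [this]
  exact Set.image_mono (f := η) ha

end MulHyperring

open MulHyperring in
theorem quasiSPrimary_image {G₁ G₂ : Type*} [MulHyperring G₁] [MulHyperring G₂]
    (η : G₁ → G₂) (hη : IsGoodHom η) (hsurj : Function.Surjective η)
    (A₁ : Set G₁) (hA₁ : IsCHyperideal A₁) (hker : {x : G₁ | η x = 0} ⊆ A₁)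
    (S : Set G₁) (hS : IsMCS S) (h0 : (0 : G₂) ∉ η '' S)
    (h : IsQuasiSPrimary S A₁) :
    IsQuasiSPrimary (η '' S) (η '' A₁) := by
  obtain ⟨hid, hdisj, t, htS, ht⟩ := h
  -- preimage fact: η x ∈ η '' A₁ → x ∈ A₁
  have hpre : ∀ x : G₁, η x ∈ η '' A₁ → x ∈ A₁ := by
    rintro x ⟨a, haA, hax⟩
    have hxa : x - a ∈ A₁ := hker (by simp [Set.mem_setOf_eq, hη.map_sub, hax])
    have h0A : (0 : G₁) ∈ A₁ := by
      simpa using hid.2.1 a haA a haA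
    have hna : -a ∈ A₁ := by simpa using hid.2.1 0 h0A a haA
    have := hid.2.1 (x - a) hxa (-a) hna
    simpa [sub_neg_eq_add, sub_add_cancel] using this
  refine ⟨?_, ?_, η t, ⟨t, htS, rfl⟩, ?_⟩
  · -- hyperideal
    obtain ⟨⟨a0, ha0⟩, hsub, hmulabs⟩ := hid
    refine ⟨⟨η a0, a0, ha0, rfl⟩, ?_, ?_⟩
    · rintro _ ⟨x, hx, rfl⟩ _ ⟨y, hy, rfl⟩
      exact ⟨x - y, hsub x hx y hy, hη.map_sub x y⟩
    · rintro r _ ⟨x, hx, rfl⟩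
      obtain ⟨r', rfl⟩ := hsurj r
      rw [← hη.map_hmul r' x]
      exact Set.image_mono (f := η) (hmulabs r' x hx)
  · -- disjoint
    rw [Set.eq_empty_iff_forall_notMem]
    rintro y ⟨⟨a, haA, rfl⟩, s, hsS, hsa⟩
    have : s ∈ A₁ := hpre s (by rw [hsa]; exact ⟨a, haA, rfl⟩)
    exact Set.eq_empty_iff_forall_notMem.mp hdisj s ⟨this, hsS⟩
  · -- primary condition
    intro u₂ v₂ huv
    obtain ⟨u, rfl⟩ := hsurj u₂
    obtain ⟨v, rfl⟩ := hsurj v₂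
    have huvA : hmul u v ⊆ A₁ := by
      intro x hx
      exact hpre x (huv (by rw [← hη.map_hmul]; exact ⟨x, hx, rfl⟩))
    rcases ht u v huvA with hc | hc
    · left
      rw [← hη.map_hmul t u]
      exact (Set.image_mono (f := η) hc).trans (hη.image_rad A₁)
    · right
      rw [← hη.map_hmul t v]
      exact (Set.image_mono (f := η) hc).trans (hη.image_rad A₁)
end
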